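/- Let α > 0 and let F, G ⊆ ℤ be finite sets. Let u : ℝ → (ℤ → ℂ) be continuous with u_{k'}(t) = 0 for all t ∈ ℝ and all k' ∉ G, and let Ψ : ℝ → (ℤ → ℂ) be differentiable with Ψ_{k'}(t) = 0 for all t and all k' ∉ F, satisfying for every k ∈ F and every t ∈ ℝ the equation Ψ_k'(t) = −2i · Σ_{(k₁,k₂,k₃) ∈ ℤ³ : k₁−k₂+k₃ = k, k₂ ≠ k₁, k₂ ≠ k₃} e^{it(|k₁|^α − |k₂|^α + |k₃|^α − |k|^α)} · u_{k₁}(t) · conj(u_{k₂}(t)) · Ψ_{k₃}(t) (a finite sum, since u and Ψ are finitely supported). Then the quantity Σ_{k∈F} |Ψ_k(t)|² is constant in t; in particular Σ_k |Ψ_k(t)|² = Σ_k |Ψ_k(0)|² for all t ∈ ℝ. -/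

import Mathlib

open Finset Complex

/-- The summand in the linearized flow ODE. -/
noncomputable def lfcTerm (α : ℝ) (u Ψ : ℝ → ℤ → ℂ) (t : ℝ) (k : ℤ) (p : ℤ × ℤ × ℤ) : ℂ :=
  Complex.exp (Complex.I * (t : ℂ) *
      (((|p.1| : ℝ) ^ α - (|p.2.1| : ℝ) ^ α + (|p.2.2| : ℝ) ^ α - (|k| : ℝ) ^ α : ℝ) : ℂ)) *
    u t p.1 * (starRingEnd ℂ) (u t p.2.1) * Ψ t p.2.2

/-- The resonance condition. -/
def lfcCond (k : ℤ) (p : ℤ × ℤ × ℤ) : Prop :=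
  p.1 - p.2.1 + p.2.2 = k ∧ p.2.1 ≠ p.1 ∧ p.2.1 ≠ p.2.2

instance (k : ℤ) : DecidablePred (lfcCond k) := fun p => by
  unfold lfcCond; infer_instance

lemma lfc_finsum_eq (α : ℝ) (F G : Finset ℤ) (u Ψ : ℝ → ℤ → ℂ)
    (hu_supp : ∀ t : ℝ, ∀ k ∉ G, u t k = 0)
    (hΨ_supp : ∀ t : ℝ, ∀ k ∉ F, Ψ t k = 0) (k : ℤ) (t : ℝ) :
    ∑ᶠ p ∈ {p : ℤ × ℤ × ℤ | lfcCond k p}, lfcTerm α u Ψ t k p =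
      ∑ p ∈ (G ×ˢ G ×ˢ F).filter (fun p => lfcCond k p), lfcTerm α u Ψ t k p := by
  classical
  apply finsum_mem_eq_sum_of_inter_support_eq
  ext p
  simp only [Set.mem_inter_iff, Set.mem_setOf_eq, Function.mem_support, Finset.coe_filter,
    Finset.mem_product]
  constructor
  · rintro ⟨hc, hne⟩
    refine ⟨⟨⟨?_, ?_, ?_⟩, hc⟩, hne⟩
    · by_contra h
      exact hne (by simp [lfcTerm, hu_supp t _ h])
    · by_contra h
      exact hne (by simp [lfcTerm, hu_supp t _ h])
    · by_contra h
      exact hne (by simp [lfcTerm, hΨ_supp t _ h])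
  · rintro ⟨⟨_, hc⟩, hne⟩
    exact ⟨hc, hne⟩

theorem linearized_flow_conservation (α : ℝ) (hα : 0 < α) (F G : Finset ℤ)
    (u Ψ : ℝ → ℤ → ℂ)
    (hu_cont : ∀ k : ℤ, Continuous fun t => u t k)
    (hu_supp : ∀ t : ℝ, ∀ k ∉ G, u t k = 0)
    (hΨ_supp : ∀ t : ℝ, ∀ k ∉ F, Ψ t k = 0)
    (hode : ∀ k ∈ F, ∀ t : ℝ,
      HasDerivAt (fun s => Ψ s k)
        (-2 * Complex.I *
          ∑ᶠ p ∈ {p : ℤ × ℤ × ℤ | p.1 - p.2.1 + p.2.2 = k ∧ p.2.1 ≠ p.1 ∧ p.2.1 ≠ p.2.2},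
            Complex.exp (Complex.I * (t : ℂ) *
                (((|p.1| : ℝ) ^ α - (|p.2.1| : ℝ) ^ α + (|p.2.2| : ℝ) ^ α -
                  (|k| : ℝ) ^ α : ℝ) : ℂ)) *
              u t p.1 * (starRingEnd ℂ) (u t p.2.1) * Ψ t p.2.2) t) :
    ∀ t : ℝ, ∑ k ∈ F, ‖Ψ t k‖ ^ 2 = ∑ k ∈ F, ‖Ψ 0 k‖ ^ 2 := by
  classical
  -- the ODE in Finset-sum form
  set Q : ℤ → Finset (ℤ × ℤ × ℤ) :=
    fun k => (G ×ˢ G ×ˢ F).filter (fun p => lfcCond k p) with hQ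
  have hode' : ∀ k ∈ F, ∀ t : ℝ,
      HasDerivAt (fun s => Ψ s k)
        (-2 * Complex.I * ∑ p ∈ Q k, lfcTerm α u Ψ t k p) t := by
    intro k hk t
    have := hode k hk t
    rwa [show (∑ᶠ p ∈ {p : ℤ × ℤ × ℤ | p.1 - p.2.1 + p.2.2 = k ∧ p.2.1 ≠ p.1 ∧ p.2.1 ≠ p.2.2},
        Complex.exp (Complex.I * (t : ℂ) *
            (((|p.1| : ℝ) ^ α - (|p.2.1| : ℝ) ^ α + (|p.2.2| : ℝ) ^ α -
              (|k| : ℝ) ^ α : ℝ) : ℂ)) *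
          u t p.1 * (starRingEnd ℂ) (u t p.2.1) * Ψ t p.2.2) =
        ∑ p ∈ Q k, lfcTerm α u Ψ t k p from
      lfc_finsum_eq α F G u Ψ hu_supp hΨ_supp k t] at this
  -- the total mass has derivative zero everywhere
  have hE : ∀ t : ℝ, HasDerivAt (fun s => ∑ k ∈ F, ‖Ψ s k‖ ^ 2) 0 t := by
    intro t
    -- W : the big sum; it is conjugation-invariant
    set W : ℂ := ∑ k ∈ F, (starRingEnd ℂ) (Ψ t k) * ∑ p ∈ Q k, lfcTerm α u Ψ t k p with hW
    have hWconj : (starRingEnd ℂ) W = W := by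
      rw [hW, map_sum]
      simp_rw [Finset.mul_sum, map_sum]
      rw [Finset.sum_sigma', Finset.sum_sigma']
      refine Finset.sum_nbij' (fun q => ⟨q.2.2.2, q.2.2.1, q.2.1, q.1⟩)
        (fun q => ⟨q.2.2.2, q.2.2.1, q.2.1, q.1⟩) ?_ ?_ ?_ ?_ ?_
      · rintro ⟨k, k1, k2, k3⟩ hq
        simp only [Finset.mem_sigma, hQ, Finset.mem_filter, Finset.mem_product] at hq ⊢
        simp only [lfcCond] at hq ⊢
        obtain ⟨hkF, ⟨h1, h2, h3⟩, he, hne1, hne2⟩ := hq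
        have he' : k1 - k2 + k3 = k := he
        have hne1' : k2 ≠ k1 := hne1
        have hne2' : k2 ≠ k3 := hne2
        exact ⟨h3, ⟨h2, h1, hkF⟩, show k2 - k1 + k = k3 by omega,
          show k1 ≠ k2 by omega, show k1 ≠ k by omega⟩
      · rintro ⟨k, k1, k2, k3⟩ hq
        simp only [Finset.mem_sigma, hQ, Finset.mem_filter, Finset.mem_product] at hq ⊢
        simp only [lfcCond] at hq ⊢
        obtain ⟨hkF, ⟨h1, h2, h3⟩, he, hne1, hne2⟩ := hq
        have he' : k1 - k2 + k3 = k := he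
        have hne1' : k2 ≠ k1 := hne1
        have hne2' : k2 ≠ k3 := hne2
        exact ⟨h3, ⟨h2, h1, hkF⟩, show k2 - k1 + k = k3 by omega,
          show k1 ≠ k2 by omega, show k1 ≠ k by omega⟩
      · rintro ⟨k, k1, k2, k3⟩ _; rfl
      · rintro ⟨k, k1, k2, k3⟩ _; rfl
      · rintro ⟨k, k1, k2, k3⟩ hq
        simp only [Finset.mem_sigma, hQ, Finset.mem_filter, Finset.mem_product] at hq
        obtain ⟨hkF, ⟨h1, h2, h3⟩, he, hne1, hne2⟩ := hq
        have hexp : (starRingEnd ℂ) (Complex.exp (Complex.I * (t : ℂ) *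
              (((|k1| : ℝ) ^ α - (|k2| : ℝ) ^ α + (|k3| : ℝ) ^ α - (|k| : ℝ) ^ α : ℝ) : ℂ))) =
            Complex.exp (Complex.I * (t : ℂ) *
              (((|k2| : ℝ) ^ α - (|k1| : ℝ) ^ α + (|k| : ℝ) ^ α - (|k3| : ℝ) ^ α : ℝ) : ℂ)) := by
          rw [← Complex.exp_conj]
          congr 1
          simp only [map_mul, map_sub, map_add, Complex.conj_I, Complex.conj_ofReal]
          push_cast
          ring
        simp only [lfcTerm, map_mul, starRingEnd_self_apply]
        rw [hexp]
        ring
    have hWim : W.im = 0 := by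
      have := congrArg Complex.im hWconj
      simp only [Complex.conj_im] at this
      linarith
    -- derivative of each coordinate mass
    have hcoord : ∀ k ∈ F, HasDerivAt (fun s => ‖Ψ s k‖ ^ 2)
        (2 * ((starRingEnd ℂ) (Ψ t k) *
          (-2 * Complex.I * ∑ p ∈ Q k, lfcTerm α u Ψ t k p)).re) t := by
      intro k hk
      set D : ℂ := -2 * Complex.I * ∑ p ∈ Q k, lfcTerm α u Ψ t k p with hD
      have hz : HasDerivAt (fun s => Ψ s k) D t := hode' k hk t
      have hmul : HasDerivAt (fun s => Ψ s k * (starRingEnd ℂ) (Ψ s k))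
          (D * (starRingEnd ℂ) (Ψ t k) + Ψ t k * (starRingEnd ℂ) D) t := by
        exact hz.mul hz.star
      have hre : HasDerivAt (fun s => (Ψ s k * (starRingEnd ℂ) (Ψ s k)).re)
          (D * (starRingEnd ℂ) (Ψ t k) + Ψ t k * (starRingEnd ℂ) D).re t :=
        Complex.reCLM.hasFDerivAt.comp_hasDerivAt t hmul
      have heq : (fun s => (Ψ s k * (starRingEnd ℂ) (Ψ s k)).re) =
          fun s => ‖Ψ s k‖ ^ 2 := by
        funext s
        rw [Complex.mul_conj, Complex.ofReal_re, Complex.normSq_eq_norm_sq]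
      rw [heq] at hre
      convert hre using 1
      have h1 : (D * (starRingEnd ℂ) (Ψ t k)).re = ((starRingEnd ℂ) (Ψ t k) * D).re := by
        ring_nf
      have h2 : (Ψ t k * (starRingEnd ℂ) D).re = ((starRingEnd ℂ) (Ψ t k) * D).re := by
        rw [← Complex.conj_re ((Ψ t k) * (starRingEnd ℂ) D), map_mul,
          RingHomCompTriple.comp_apply]
        simp
      rw [Complex.add_re, h1, h2]
      ring
    have hsum := HasDerivAt.sum (fun k hk => hcoord k hk)
    convert hsum using 1
    · rfl
    · rfl
    · funext s; simp only [Finset.sum_apply]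
    have : ∀ k ∈ F, 2 * ((starRingEnd ℂ) (Ψ t k) *
        (-2 * Complex.I * ∑ p ∈ Q k, lfcTerm α u Ψ t k p)).re =
        4 * ((starRingEnd ℂ) (Ψ t k) * ∑ p ∈ Q k, lfcTerm α u Ψ t k p).im := by
      intro k hk
      set X : ℂ := (starRingEnd ℂ) (Ψ t k) * ∑ p ∈ Q k, lfcTerm α u Ψ t k p with hX
      have : (starRingEnd ℂ) (Ψ t k) *
          (-2 * Complex.I * ∑ p ∈ Q k, lfcTerm α u Ψ t k p) = -2 * Complex.I * X := by
        rw [hX]; ring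
      rw [this]
      simp [Complex.mul_re, Complex.mul_im]
      ring
    rw [Finset.sum_congr rfl this, ← Finset.mul_sum, ← Complex.im_sum, ← hW, hWim]
    ring
  -- conclude by constancy
  intro t
  have hdiff : Differentiable ℝ (fun s => ∑ k ∈ F, ‖Ψ s k‖ ^ 2) :=
    fun s => (hE s).differentiableAt
  have hderiv : ∀ s, deriv (fun s => ∑ k ∈ F, ‖Ψ s k‖ ^ 2) s = 0 :=
    fun s => (hE s).deriv
  exact is_const_of_deriv_eq_zero hdiff hderiv t 0
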